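/- Let X be a complex Banach space, G ⊆ X a bounded balanced domain, and f : G → ℂ a holomorphic function whose values lie in the right half-plane ℍ = {z ∈ ℂ : Re z > 0}, with power series expansion f(x) = f(0) + Σ_{m≥1} (1/m!) D^m f(0)(x^m) in a neighbourhood of the origin. Then for every x ∈ (1/3)·G one has Σ_{m≥1} |(1/m!) D^m f(0)(x^m)| ≤ Re f(0), i.e. the Bohr sum of the nonconstant terms is bounded by the distance d(f(0), ∂ℍ) = Re f(0). -/

import Mathlib

open scoped Pointwise

open Complex MeasureTheory intervalIntegral Metric Real
open scoped NNReal ENNReal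

/-- The unit circle parametrization used below. -/
noncomputable def bohrE (θ : ℝ) : ℂ := Complex.exp (θ * Complex.I)

lemma bohrE_ne (θ : ℝ) : bohrE θ ≠ 0 := Complex.exp_ne_zero _

lemma bohrE_norm (θ : ℝ) : ‖bohrE θ‖ = 1 := Complex.norm_exp_ofReal_mul_I θ

lemma bohrE_mem (θ : ℝ) : bohrE θ ∈ closedBall (0:ℂ) 1 := by
  rw [mem_closedBall_zero_iff]; exact (bohrE_norm θ).le

lemma bohrE_conj (θ : ℝ) : (starRingEnd ℂ) (bohrE θ) = (bohrE θ)⁻¹ := by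
  rw [bohrE, ← Complex.exp_conj, ← Complex.exp_neg]
  congr 1
  simp [Complex.conj_I]

lemma bohrE_cont : Continuous bohrE := by unfold bohrE; fun_prop

lemma bohr_intervalIntegral_conj {f : ℝ → ℂ} {a b : ℝ} :
    (∫ x in a..b, (starRingEnd ℂ) (f x)) = (starRingEnd ℂ) (∫ x in a..b, f x) := by
  rw [intervalIntegral, intervalIntegral, integral_conj, integral_conj, ← map_sub]

lemma bohr_intervalIntegral_re {f : ℝ → ℂ} {a b : ℝ} (hf : IntervalIntegrable f volume a b) :
    (∫ x in a..b, (f x).re) = (∫ x in a..b, f x).re := by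
  have h1 := integral_re hf.1
  have h2 := integral_re hf.2
  simp only [RCLike.re_to_complex] at h1 h2
  rw [intervalIntegral, intervalIntegral, Complex.sub_re, ← h1, ← h2]

lemma bohr_coeff_formula (g : ℂ → ℂ) (n : ℕ) :
    (cauchyPowerSeries g 0 1).coeff n
      = ((2 * π : ℝ) : ℂ)⁻¹ * ∫ θ in (0:ℝ)..2*π, (bohrE θ)⁻¹ ^ n * g (bohrE θ) := by
  have h1 : (cauchyPowerSeries g 0 1).coeff n
      = (2 * π * Complex.I)⁻¹ • ∮ z in C((0:ℂ),1), (z - 0)⁻¹ ^ n • (z - 0)⁻¹ • g z := by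
    simp [FormalMultilinearSeries.coeff, cauchyPowerSeries]
  have h2 : (∮ z in C((0:ℂ),1), (z - 0)⁻¹ ^ n • (z - 0)⁻¹ • g z)
      = ∫ θ in (0:ℝ)..2*π, (bohrE θ * Complex.I) * ((bohrE θ)⁻¹ ^ n * ((bohrE θ)⁻¹ * g (bohrE θ))) := by
    simp [circleIntegral, deriv_circleMap, circleMap, smul_eq_mul, bohrE]
  have h3 : (∫ θ in (0:ℝ)..2*π, (bohrE θ * Complex.I) * ((bohrE θ)⁻¹ ^ n * ((bohrE θ)⁻¹ * g (bohrE θ))))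
      = Complex.I * ∫ θ in (0:ℝ)..2*π, (bohrE θ)⁻¹ ^ n * g (bohrE θ) := by
    rw [← intervalIntegral.integral_const_mul]
    apply intervalIntegral.integral_congr
    intro θ _
    field_simp [bohrE_ne θ]
  rw [h1, h2, h3, smul_eq_mul]
  have hI : Complex.I ≠ 0 := Complex.I_ne_zero
  have hπ : (π : ℂ) ≠ 0 := by exact_mod_cast Real.pi_ne_zero
  push_cast
  field_simp

lemma bohr_vanish (g : ℂ → ℂ) (hd : ∀ z ∈ closedBall (0:ℂ) 1, DifferentiableAt ℂ g z) (k : ℕ) :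
    (∫ θ in (0:ℝ)..2*π, (bohrE θ) ^ (k+1) * g (bohrE θ)) = 0 := by
  have hz : (∮ z in C((0:ℂ),1), z ^ k * g z) = 0 := by
    apply circleIntegral_eq_zero_of_differentiable_on_off_countable zero_le_one Set.countable_empty
    · intro z hz
      exact (((differentiableAt_pow k).mul (hd z hz)).continuousAt).continuousWithinAt
    · intro z hz
      exact (differentiableAt_pow k).mul (hd z (ball_subset_closedBall hz.1))
  have h2 : (∮ z in C((0:ℂ),1), z ^ k * g z)
      = ∫ θ in (0:ℝ)..2*π, (bohrE θ * Complex.I) * ((bohrE θ) ^ k * g (bohrE θ)) := by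
    simp [circleIntegral, deriv_circleMap, circleMap, smul_eq_mul, bohrE]
  have h3 : (∫ θ in (0:ℝ)..2*π, (bohrE θ * Complex.I) * ((bohrE θ) ^ k * g (bohrE θ)))
      = Complex.I * ∫ θ in (0:ℝ)..2*π, (bohrE θ) ^ (k+1) * g (bohrE θ) := by
    rw [← intervalIntegral.integral_const_mul]
    apply intervalIntegral.integral_congr
    intro θ _
    ring
  rw [h2, h3] at hz
  exact (mul_eq_zero.mp hz).resolve_left Complex.I_ne_zero

/-- Carathéodory-type bound for Taylor coefficients of a holomorphic function with
nonnegative real part on the closed unit disc. -/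
lemma bohr_carath (g : ℂ → ℂ) (hd : ∀ z ∈ closedBall (0:ℂ) 1, DifferentiableAt ℂ g z)
    (hre : ∀ z ∈ closedBall (0:ℂ) 1, 0 ≤ (g z).re) (k : ℕ) :
    ‖(cauchyPowerSeries g 0 1).coeff (k+1)‖ ≤ 2 * (g 0).re := by
  set u : ℝ → ℂ := fun θ => g (bohrE θ) with hu_def
  have hu : Continuous u :=
    continuous_iff_continuousAt.2 fun θ =>
      ((hd _ (bohrE_mem θ)).continuousAt).comp bohrE_cont.continuousAt
  have hEinv : Continuous (fun θ => (bohrE θ)⁻¹ ^ (k+1)) := (bohrE_cont.inv₀ bohrE_ne).pow _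
  have int1 : IntervalIntegrable (fun θ => (bohrE θ)⁻¹ ^ (k+1) * u θ) volume 0 (2*π) :=
    (hEinv.mul hu).intervalIntegrable _ _
  have int2 : IntervalIntegrable (fun θ => (bohrE θ)⁻¹ ^ (k+1) * (starRingEnd ℂ) (u θ))
      volume 0 (2*π) :=
    (hEinv.mul (Complex.continuous_conj.comp hu)).intervalIntegrable _ _
  have intu : IntervalIntegrable u volume 0 (2*π) := hu.intervalIntegrable _ _
  have Jc : (∫ θ in (0:ℝ)..2*π, (bohrE θ)⁻¹ ^ (k+1) * (starRingEnd ℂ) (u θ)) = 0 := by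
    have hpt : ∀ θ ∈ Set.uIcc (0:ℝ) (2*π), (bohrE θ)⁻¹ ^ (k+1) * (starRingEnd ℂ) (u θ)
        = (starRingEnd ℂ) ((bohrE θ) ^ (k+1) * u θ) := by
      intro θ _
      rw [map_mul, map_pow, bohrE_conj]
    rw [intervalIntegral.integral_congr hpt, bohr_intervalIntegral_conj,
      bohr_vanish g hd k, map_zero]
  have hball : HasFPowerSeriesOnBall g (cauchyPowerSeries g 0 1) 0 1 := by
    have hdo : DifferentiableOn ℂ g (closedBall (0:ℂ) ((1:ℝ≥0) : ℝ)) := by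
      intro z hz
      exact (hd z (by simpa using hz)).differentiableWithinAt
    simpa using hdo.hasFPowerSeriesOnBall (by norm_num : (0:ℝ≥0) < 1)
  have hg0 : (cauchyPowerSeries g 0 1).coeff 0 = g 0 := hball.coeff_zero _
  have hc0 : (cauchyPowerSeries g 0 1).coeff 0
      = ((2 * π : ℝ) : ℂ)⁻¹ * ∫ θ in (0:ℝ)..2*π, u θ := by
    rw [bohr_coeff_formula]
    simp
    rfl
  have hcne : ((2 * π : ℝ) : ℂ) ≠ 0 := by
    exact_mod_cast (by positivity : (2*π:ℝ) ≠ 0)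
  have hintu : (∫ θ in (0:ℝ)..2*π, u θ) = ((2 * π : ℝ) : ℂ) * g 0 := by
    rw [← hg0, hc0, ← mul_assoc, mul_inv_cancel₀ hcne, one_mul]
  have hreint : (∫ θ in (0:ℝ)..2*π, (u θ).re) = 2 * π * (g 0).re := by
    rw [bohr_intervalIntegral_re intu, hintu]
    simp [Complex.mul_re]
  have hJ : (∫ θ in (0:ℝ)..2*π, (bohrE θ)⁻¹ ^ (k+1) * u θ)
      = ∫ θ in (0:ℝ)..2*π,
          ((bohrE θ)⁻¹ ^ (k+1) * u θ + (bohrE θ)⁻¹ ^ (k+1) * (starRingEnd ℂ) (u θ)) := by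
    rw [intervalIntegral.integral_add int1 int2, Jc, add_zero]
  have hnorm : ‖∫ θ in (0:ℝ)..2*π, (bohrE θ)⁻¹ ^ (k+1) * u θ‖ ≤ 2 * (2 * π * (g 0).re) := by
    rw [hJ]
    have hb := intervalIntegral.norm_integral_le_integral_norm
      (f := fun θ => (bohrE θ)⁻¹ ^ (k+1) * u θ + (bohrE θ)⁻¹ ^ (k+1) * (starRingEnd ℂ) (u θ))
      (μ := volume) (by positivity : (0:ℝ) ≤ 2*π)
    refine hb.trans ?_
    have heq : (∫ θ in (0:ℝ)..2*π,
          ‖(bohrE θ)⁻¹ ^ (k+1) * u θ + (bohrE θ)⁻¹ ^ (k+1) * (starRingEnd ℂ) (u θ)‖)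
        = ∫ θ in (0:ℝ)..2*π, 2 * (u θ).re := by
      apply intervalIntegral.integral_congr
      intro θ _
      have h1 : (bohrE θ)⁻¹ ^ (k+1) * u θ + (bohrE θ)⁻¹ ^ (k+1) * (starRingEnd ℂ) (u θ)
          = (bohrE θ)⁻¹ ^ (k+1) * ((2 * (u θ).re : ℝ) : ℂ) := by
        rw [← mul_add, Complex.add_conj]
      simp only [h1]
      rw [norm_mul, norm_pow, norm_inv, bohrE_norm]
      simp only [inv_one, one_pow, one_mul, Complex.norm_real]
      have := hre _ (bohrE_mem θ)
      exact abs_of_nonneg (by positivity)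
    rw [heq, intervalIntegral.integral_const_mul, hreint]
  calc ‖(cauchyPowerSeries g 0 1).coeff (k+1)‖
      = ‖((2 * π : ℝ) : ℂ)⁻¹‖ * ‖∫ θ in (0:ℝ)..2*π, (bohrE θ)⁻¹ ^ (k+1) * u θ‖ := by
        rw [bohr_coeff_formula, norm_mul]
    _ ≤ ‖((2 * π : ℝ) : ℂ)⁻¹‖ * (2 * (2 * π * (g 0).re)) :=
        mul_le_mul_of_nonneg_left hnorm (norm_nonneg _)
    _ = 2 * (g 0).re := by
        rw [norm_inv, Complex.norm_real, Real.norm_eq_abs, abs_of_pos (by positivity)]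
        field_simp

/-- Bohr's theorem for holomorphic maps from a bounded balanced domain `G` in a
complex Banach space into the right half-plane: for `x ∈ (1/3)·G`, the Bohr sum
of the nonconstant terms is bounded by `d(f(0), ∂ℍ) = Re f(0)`. -/
theorem bohr_halfPlane {X : Type*} [NormedAddCommGroup X] [NormedSpace ℂ X]
    [CompleteSpace X]
    (G : Set X) (hGopen : IsOpen G) (hGconn : IsConnected G)
    (hGbdd : Bornology.IsBounded G)
    (hGbal : ∀ z : ℂ, ‖z‖ ≤ 1 → z • G ⊆ G)
    (f : X → ℂ) (hf : DifferentiableOn ℂ f G)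
    (hmaps : Set.MapsTo f G {z : ℂ | 0 < z.re})
    (p : FormalMultilinearSeries ℂ X ℂ) (hp : HasFPowerSeriesAt f p 0)
    (x : X) (hx : x ∈ (1 / 3 : ℂ) • G) :
    Summable (fun m : ℕ => ‖p (m + 1) (fun _ => x)‖) ∧
      ∑' m : ℕ, ‖p (m + 1) (fun _ => x)‖ ≤ (f 0).re := by
  obtain ⟨y, hy, rfl⟩ := hx
  have hyG : ∀ z : ℂ, ‖z‖ ≤ 1 → z • y ∈ G := fun z hz => hGbal z hz ⟨y, hy, rfl⟩
  set g : ℂ → ℂ := fun z => f (z • y) with hg_def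
  have hg0 : g 0 = f 0 := by simp [hg_def]
  have hgd : ∀ z ∈ closedBall (0:ℂ) 1, DifferentiableAt ℂ g z := by
    intro z hz
    have hz1 : ‖z‖ ≤ 1 := by rwa [mem_closedBall_zero_iff] at hz
    have hfz : DifferentiableAt ℂ f (z • y) :=
      hf.differentiableAt (hGopen.mem_nhds (hyG z hz1))
    exact hfz.comp z ((differentiable_id.smul_const y) z)
  have hgre : ∀ z ∈ closedBall (0:ℂ) 1, 0 ≤ (g z).re := fun z hz =>
    (hmaps (hyG z (mem_closedBall_zero_iff.mp hz))).le
  set c : FormalMultilinearSeries ℂ ℂ ℂ :=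
    fun m => ContinuousMultilinearMap.mkPiRing ℂ (Fin m) (p m fun _ => y) with hc_def
  have hcat : HasFPowerSeriesAt g c 0 := by
    obtain ⟨r, hfr⟩ := hp
    obtain ⟨ρ, hρ0, hρr⟩ := ENNReal.lt_iff_exists_nnreal_btwn.mp hfr.r_pos
    have hρ0' : (0:ℝ≥0) < ρ := by exact_mod_cast hρ0
    set δ : ℝ≥0 := ρ / (‖y‖₊ + 1) with hδ_def
    have hδ0 : 0 < δ := by positivity
    have hδmul : δ * (‖y‖₊ + 1) = ρ := by
      rw [hδ_def, div_mul_cancel₀]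
      positivity
    have hδmulR : (δ:ℝ) * (‖y‖ + 1) = ρ := by
      rw [← hδmul]
      push_cast
      ring
    refine ⟨(δ : ℝ≥0∞), ?_, ?_, ?_⟩
    · apply FormalMultilinearSeries.le_radius_of_summable
      have hs := p.summable_norm_mul_pow (r := ρ) (hρr.trans_le hfr.r_le)
      apply Summable.of_nonneg_of_le (fun n => by positivity) _ hs
      intro n
      have h1 : ‖c n‖ = ‖p n fun _ => y‖ := ContinuousMultilinearMap.norm_mkPiRing _
      have h2 : ‖p n fun _ => y‖ ≤ ‖p n‖ * ‖y‖ ^ n := by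
        have := (p n).le_opNorm (fun _ => y)
        simpa using this
      calc ‖c n‖ * (δ:ℝ) ^ n ≤ (‖p n‖ * ‖y‖ ^ n) * (δ:ℝ) ^ n := by
            rw [h1]; exact mul_le_mul_of_nonneg_right h2 (by positivity)
        _ = ‖p n‖ * (‖y‖ * (δ:ℝ)) ^ n := by
            rw [mul_pow]; ring
        _ ≤ ‖p n‖ * (ρ:ℝ) ^ n := by
            apply mul_le_mul_of_nonneg_left _ (norm_nonneg _)
            apply pow_le_pow_left₀ (by positivity)
            nlinarith [norm_nonneg y, δ.coe_nonneg]
    · exact_mod_cast hδ0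
    · intro z hz
      rw [mem_emetric_ball_zero_iff, enorm_eq_nnnorm, ENNReal.coe_lt_coe] at hz
      have hzy : ‖z • y‖₊ < ρ := by
        rw [nnnorm_smul]
        calc ‖z‖₊ * ‖y‖₊ ≤ ‖z‖₊ * (‖y‖₊ + 1) := by
              exact mul_le_mul_of_nonneg_left (le_add_of_nonneg_right zero_le_one) (by positivity)
          _ < δ * (‖y‖₊ + 1) := by
              exact mul_lt_mul_of_pos_right hz (by positivity)
          _ = ρ := hδmul
      have hmem : z • y ∈ EMetric.ball (0:X) r := by
        show edist (z • y) 0 < r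
        rw [edist_zero_right, enorm_eq_nnnorm]
        exact lt_trans (ENNReal.coe_lt_coe.mpr hzy) hρr
      have hsum := hfr.hasSum hmem
      have heq : (fun n => c n fun _ => z) = (fun n => p n fun _ => z • y) := by
        funext n
        rw [hc_def]
        rw [ContinuousMultilinearMap.mkPiRing_apply,
          ← (p n).map_smul_univ (fun _ : Fin n => z) (fun _ => y)]
      rw [heq]
      simpa using hsum
  have hqat : HasFPowerSeriesAt g (cauchyPowerSeries g 0 1) 0 := by
    have hball : HasFPowerSeriesOnBall g (cauchyPowerSeries g 0 1) 0 1 := by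
      have hdo : DifferentiableOn ℂ g (closedBall (0:ℂ) ((1:ℝ≥0) : ℝ)) := by
        intro z hz
        exact (hgd z (by simpa using hz)).differentiableWithinAt
      simpa using hdo.hasFPowerSeriesOnBall (by norm_num : (0:ℝ≥0) < 1)
    exact hball.hasFPowerSeriesAt
  have hceq : c = cauchyPowerSeries g 0 1 := hcat.eq_formalMultilinearSeries hqat
  have hbound : ∀ k : ℕ, ‖p (k+1) fun _ => y‖ ≤ 2 * (f 0).re := by
    intro k
    have h := bohr_carath g hgd hgre k
    rw [← hceq, hg0] at h
    have hco : c.coeff (k+1) = p (k+1) fun _ => y := by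
      simp [hc_def, FormalMultilinearSeries.coeff, ContinuousMultilinearMap.mkPiRing_apply]
    rwa [hco] at h
  have hre0 : 0 ≤ (f 0).re := by
    have h0 : (0:X) ∈ G := by
      have := hyG 0 (by simp)
      simpa using this
    exact (hmaps h0).le
  have hxval : ∀ m : ℕ, ‖p (m+1) fun _ => (1/3:ℂ) • y‖
      = (1/3:ℝ)^(m+1) * ‖p (m+1) fun _ => y‖ := by
    intro m
    have h := (p (m+1)).map_smul_univ (fun _ : Fin (m+1) => (1/3:ℂ)) (fun _ => y)
    rw [show (fun _ : Fin (m+1) => (1/3:ℂ) • y)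
        = (fun i : Fin (m+1) => (fun _ : Fin (m+1) => (1/3:ℂ)) i • (fun _ : Fin (m+1) => y) i)
        from rfl, h]
    rw [norm_smul, Finset.prod_const, Finset.card_univ, Fintype.card_fin, norm_pow]
    norm_num
  have hterm : ∀ m : ℕ, ‖p (m+1) fun _ => (1/3:ℂ) • y‖
      ≤ (2 * (f 0).re / 3) * (1/3:ℝ)^m := by
    intro m
    rw [hxval m]
    calc (1/3:ℝ)^(m+1) * ‖p (m+1) fun _ => y‖ ≤ (1/3:ℝ)^(m+1) * (2*(f 0).re) :=
          mul_le_mul_of_nonneg_left (hbound m) (by positivity)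
      _ = (2 * (f 0).re / 3) * (1/3:ℝ)^m := by ring
  have hgs : Summable (fun m : ℕ => (2 * (f 0).re / 3) * (1/3:ℝ)^m) :=
    (summable_geometric_of_lt_one (by norm_num) (by norm_num)).mul_left _
  have hsumm : Summable (fun m : ℕ => ‖p (m+1) fun _ => (1/3:ℂ) • y‖) :=
    Summable.of_nonneg_of_le (fun m => norm_nonneg _) hterm hgs
  refine ⟨hsumm, ?_⟩
  calc (∑' m : ℕ, ‖p (m+1) fun _ => (1/3:ℂ) • y‖)
      ≤ ∑' m : ℕ, (2 * (f 0).re / 3) * (1/3:ℝ)^m := Summable.tsum_le_tsum hterm hsumm hgs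
    _ = (2 * (f 0).re / 3) * (1 - 1/3:ℝ)⁻¹ := by
        rw [tsum_mul_left, tsum_geometric_of_lt_one (by norm_num) (by norm_num)]
    _ = (f 0).re := by ring
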